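/- Let F : ℝ^d → ℝ be C² with lim_{|x|→∞} F(x) = ∞, and suppose there are constants c₁, c₂ > 0 and a₁ > 0 such that |∇F(x)|² ≥ c₁|x|^{a₁} − c₂ for all x ∈ ℝ^d. Then there exist constants c̃₁, c̃₂ > 0 such that F(x) ≥ c̃₁|x|^{a₁/2 + 1} − c̃₂ for all x ∈ ℝ^d. -/

import Mathlib

open MeasureTheory Filter Real

open Topology in

lemma grad_norm_le {E : Type*} [NormedAddCommGroup E] [InnerProductSpace ℝ E]
    [CompleteSpace E] (f : E → ℝ) (y : E) (K : ℝ) (hK : 0 ≤ K)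
    (hd : DifferentiableAt ℝ f y) (h : ∀ z, f y ≤ f z + K * ‖z - y‖) :
    ‖gradient f y‖ ≤ K := by
  set v := gradient f y with hv
  have hgrad : HasGradientAt f v y := hd.hasGradientAt
  have hline : HasDerivAt (fun t : ℝ => f (y - t • v)) (-‖v‖ ^ 2) 0 := by
    have h1 : HasDerivAt (fun t : ℝ => y - t • v) (-v) 0 := by
      simpa using ((hasDerivAt_id (0:ℝ)).smul_const v).const_sub y
    have h2 := (show HasFDerivAt f ((InnerProductSpace.toDual ℝ E) v) (y - (0:ℝ) • v) by
      simpa using hgrad.hasFDerivAt).comp_hasDerivAt 0 h1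
    have h3 : (InnerProductSpace.toDual ℝ E v) (-v) = -‖v‖ ^ 2 := by
      simp [InnerProductSpace.toDual_apply_apply, real_inner_self_eq_norm_sq]
    simpa [h3, Function.comp_def] using h2
  have hslope : Tendsto (slope (fun t : ℝ => f (y - t • v)) 0) (𝓝[≠] (0:ℝ))
      (𝓝 (-‖v‖ ^ 2)) := hasDerivAt_iff_tendsto_slope.mp hline
  have hge : -(K * ‖v‖) ≤ -‖v‖ ^ 2 := by
    have hmono : 𝓝[Set.Ioi (0:ℝ)] 0 ≤ 𝓝[≠] (0:ℝ) :=
      nhdsWithin_mono _ (fun t ht => ne_of_gt ht)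
    refine ge_of_tendsto (hslope.mono_left hmono) ?_
    · filter_upwards [self_mem_nhdsWithin] with t ht
      have ht' : (0:ℝ) < t := ht
      have h4 := h (y - t • v)
      have hnorm : ‖(y - t • v) - y‖ = t * ‖v‖ := by
        rw [show (y - t • v) - y = -(t • v) by abel]
        rw [norm_neg, norm_smul, Real.norm_eq_abs, abs_of_pos ht']
      rw [hnorm] at h4
      rw [slope_def_field]
      rw [show t - 0 = t from sub_zero t, le_div_iff₀ ht']
      simp only [zero_smul, sub_zero] at *
      nlinarith
  rcases eq_or_lt_of_le (norm_nonneg v) with h0 | h0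
  · rw [← h0]; exact hK
  · nlinarith


theorem stmt_2 {d : ℕ} (F : EuclideanSpace ℝ (Fin d) → ℝ)
    (hF : ContDiff ℝ 2 F)
    (hlim : Tendsto F (cocompact (EuclideanSpace ℝ (Fin d))) atTop)
    (a₁ c₁ c₂ : ℝ) (ha₁ : 0 < a₁) (hc₁ : 0 < c₁) (hc₂ : 0 < c₂)
    (hgrad_lo : ∀ x, c₁ * ‖x‖ ^ a₁ - c₂ ≤ ‖gradient F x‖ ^ 2) :
    ∃ C₁ C₂ : ℝ, 0 < C₁ ∧ 0 < C₂ ∧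
      ∀ x, C₁ * ‖x‖ ^ (a₁ / 2 + 1) - C₂ ≤ F x := by
  have hFc : Continuous F := hF.continuous
  have hFd : ∀ y, DifferentiableAt ℝ F y :=
    fun y => (hF.differentiable (by norm_num)).differentiableAt
  obtain ⟨x₀, hx₀⟩ := hFc.exists_forall_le hlim
  set m := F x₀ with hm
  -- Ekeland-type step
  have ekeland : ∀ x : EuclideanSpace ℝ (Fin d), ∀ lam : ℝ, 0 < lam →
      ∃ y, ‖y - x‖ ≤ lam ∧ ∀ z, F y ≤ F z + ((F x - m) / lam) * ‖z - y‖ := by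
    intro x lam hlam
    set ε := F x - m with hε
    have hε0 : 0 ≤ ε := sub_nonneg.mpr (hx₀ x)
    rcases eq_or_lt_of_le hε0 with hε0' | hε0'
    · refine ⟨x, by simp [hlam.le], fun z => ?_⟩
      have hxm : F x = m := by simp only [hε] at hε0'; linarith
      have : (F x - m) / lam = 0 := by rw [hxm]; simp
      rw [this]
      simpa using (hxm ▸ hx₀ z : F x ≤ F z)
    · set K := ε / lam with hK
      have hKpos : 0 < K := div_pos hε0' hlam
      set G : EuclideanSpace ℝ (Fin d) → ℝ := fun z => F z + K * ‖z - x‖ with hG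
      have hGc : Continuous G :=
        hFc.add (continuous_const.mul ((continuous_id.sub continuous_const).norm))
      have hGcoer : Tendsto G (cocompact _) atTop := by
        refine tendsto_atTop_mono (fun z => ?_) hlim
        exact le_add_of_nonneg_right (by positivity)
      obtain ⟨y, hy⟩ := hGc.exists_forall_le hGcoer
      have h1 : F y + K * ‖y - x‖ ≤ F x := by
        have := hy x; simpa [hG] using this
      have h2 : ‖y - x‖ ≤ lam := by
        have hmy : m ≤ F y := hx₀ y
        have : K * ‖y - x‖ ≤ ε := by linarith
        calc ‖y - x‖ = (K * ‖y - x‖) / K := by field_simp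
          _ ≤ ε / K := by gcongr
          _ = lam := by rw [hK]; field_simp
      refine ⟨y, h2, fun z => ?_⟩
      have h3 := hy z
      have htri : ‖z - x‖ ≤ ‖z - y‖ + ‖y - x‖ := by
        simpa using norm_sub_le_norm_sub_add_norm_sub z y x
      simp only [hG] at h3
      nlinarith [hKpos.le]
  -- key estimate for large x
  have key : ∀ x : EuclideanSpace ℝ (Fin d), 2 * c₂ ≤ c₁ * (‖x‖ / 2) ^ a₁ →
      m + Real.sqrt (c₁ / 2) * (‖x‖ / 2) ^ (a₁ / 2 + 1) ≤ F x := by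
    intro x hx
    set lam := ‖x‖ / 2 with hlamdef
    have hlam : 0 < lam := by
      rcases eq_or_lt_of_le (norm_nonneg x) with h0 | h0
      · exfalso
        have : lam = 0 := by simp [hlamdef, ← h0]
        rw [this, Real.zero_rpow ha₁.ne'] at hx
        nlinarith
      · positivity
    obtain ⟨y, hy1, hy2⟩ := ekeland x lam hlam
    set K := (F x - m) / lam with hKdef
    have hK0 : 0 ≤ K := div_nonneg (sub_nonneg.mpr (hx₀ x)) hlam.le
    have hgy : ‖gradient F y‖ ≤ K := grad_norm_le F y K hK0 (hFd y) hy2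
    have hylo : lam ≤ ‖y‖ := by
      have := norm_sub_norm_le x y
      have h2 : ‖x - y‖ = ‖y - x‖ := norm_sub_rev x y
      have : ‖x‖ - ‖y‖ ≤ lam := by rw [← h2] at hy1; linarith [norm_sub_norm_le x y]
      linarith [hlamdef ▸ this]
    have hsq : c₁ * ‖y‖ ^ a₁ - c₂ ≤ K ^ 2 := by
      refine (hgrad_lo y).trans ?_
      have := norm_nonneg (gradient F y)
      nlinarith
    have hmono : c₁ * lam ^ a₁ ≤ c₁ * ‖y‖ ^ a₁ := by
      have := Real.rpow_le_rpow hlam.le hylo ha₁.le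
      nlinarith
    have hKsq : (c₁ / 2) * lam ^ a₁ ≤ K ^ 2 := by nlinarith
    have hsqrt : Real.sqrt (c₁ / 2) * lam ^ (a₁ / 2) ≤ K := by
      have h1 : Real.sqrt ((c₁ / 2) * lam ^ a₁) ≤ Real.sqrt (K ^ 2) :=
        Real.sqrt_le_sqrt hKsq
      rw [Real.sqrt_sq hK0] at h1
      refine le_trans (le_of_eq ?_) h1
      rw [Real.sqrt_mul (by positivity) , Real.sqrt_eq_rpow (lam ^ a₁),
        ← Real.rpow_mul hlam.le]
      ring_nf
    have hpow : lam ^ (a₁ / 2) * lam = lam ^ (a₁ / 2 + 1) := by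
      rw [Real.rpow_add hlam, Real.rpow_one]
    have hfin : Real.sqrt (c₁ / 2) * lam ^ (a₁ / 2 + 1) ≤ F x - m := by
      have h2 : Real.sqrt (c₁ / 2) * lam ^ (a₁ / 2) * lam ≤ K * lam :=
        mul_le_mul_of_nonneg_right hsqrt hlam.le
      have h3 : K * lam = F x - m := by rw [hKdef]; field_simp
      rw [mul_assoc, hpow] at h2
      linarith
    linarith
  -- assemble constants
  set p := a₁ / 2 + 1 with hpdef
  have hp0 : 0 < p := by positivity
  set C₁ := Real.sqrt (c₁ / 2) / (2 : ℝ) ^ p with hC₁def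
  have hC₁ : 0 < C₁ := by
    apply div_pos (Real.sqrt_pos.mpr (by positivity))
    exact Real.rpow_pos_of_pos (by norm_num) p
  set ρ := (2 * c₂ / c₁) ^ (1 / a₁) with hρdef
  have hρ : 0 < ρ := Real.rpow_pos_of_pos (by positivity) _
  set B := C₁ * (2 * ρ) ^ p with hBdef
  have hB : 0 ≤ B := mul_nonneg hC₁.le (Real.rpow_nonneg (by positivity) _)
  refine ⟨C₁, B + |m| + 1, hC₁, by positivity, fun x => ?_⟩
  by_cases hcase : 2 * c₂ ≤ c₁ * (‖x‖ / 2) ^ a₁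
  · have h1 := key x hcase
    have h2 : (‖x‖ / 2) ^ p = ‖x‖ ^ p / (2:ℝ) ^ p :=
      Real.div_rpow (norm_nonneg x) (by norm_num : (0:ℝ) ≤ 2) p
    have h3 : Real.sqrt (c₁ / 2) * (‖x‖ / 2) ^ p = C₁ * ‖x‖ ^ p := by
      rw [h2, hC₁def]; field_simp
    rw [h3] at h1
    have : -(B + |m| + 1) ≤ m := by
      have := abs_nonneg m
      have := neg_abs_le m
      linarith
    linarith
  · push_neg at hcase
    have hxρ : ‖x‖ / 2 < ρ := by
      by_contra hcon
      push_neg at hcon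
      have h1 : ρ ^ a₁ ≤ (‖x‖ / 2) ^ a₁ := Real.rpow_le_rpow hρ.le hcon ha₁.le
      have h2 : ρ ^ a₁ = 2 * c₂ / c₁ := by
        rw [hρdef, ← Real.rpow_mul (by positivity), one_div,
          inv_mul_cancel₀ ha₁.ne', Real.rpow_one]
      rw [h2] at h1
      have : 2 * c₂ ≤ c₁ * (‖x‖ / 2) ^ a₁ := by
        rw [div_le_iff₀ hc₁] at h1; linarith
      linarith
    have hx2ρ : ‖x‖ ≤ 2 * ρ := by linarith
    have h4 : C₁ * ‖x‖ ^ p ≤ B := by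
      rw [hBdef]
      exact mul_le_mul_of_nonneg_left
        (Real.rpow_le_rpow (norm_nonneg x) hx2ρ hp0.le) hC₁.le
    have h5 : m ≤ F x := hx₀ x
    have := neg_abs_le m
    linarith
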